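/- For the quartic g = x_2⁴ + x_0 x_2² x_3 + x_1 x_2 x_3² + x_3⁴ in four variables, Hess(g) = 9(x_2 x_3)⁴; and the partially polarized Hessian Hess_x(Σ_{i,j=0}^{3} u_i v_j ∂²g/∂x_i∂x_j) equals 16(u_3² v_2² + u_2 u_3 v_2 v_3 + u_2² v_3²)², which is not a fourth power of a bilinear form in (u,v). -/

import Mathlib

open MvPolynomial

theorem det_fin_four' {R : Type*} [CommRing R] (A : Matrix (Fin 4) (Fin 4) R) :
    A.det = A 0 0 * A 1 1 * A 2 2 * A 3 3 - A 0 0 * A 1 1 * A 2 3 * A 3 2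
      - A 0 0 * A 1 2 * A 2 1 * A 3 3 + A 0 0 * A 1 2 * A 2 3 * A 3 1
      + A 0 0 * A 1 3 * A 2 1 * A 3 2 - A 0 0 * A 1 3 * A 2 2 * A 3 1
      - A 0 1 * A 1 0 * A 2 2 * A 3 3 + A 0 1 * A 1 0 * A 2 3 * A 3 2
      + A 0 1 * A 1 2 * A 2 0 * A 3 3 - A 0 1 * A 1 2 * A 2 3 * A 3 0
      - A 0 1 * A 1 3 * A 2 0 * A 3 2 + A 0 1 * A 1 3 * A 2 2 * A 3 0
      + A 0 2 * A 1 0 * A 2 1 * A 3 3 - A 0 2 * A 1 0 * A 2 3 * A 3 1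
      - A 0 2 * A 1 1 * A 2 0 * A 3 3 + A 0 2 * A 1 1 * A 2 3 * A 3 0
      + A 0 2 * A 1 3 * A 2 0 * A 3 1 - A 0 2 * A 1 3 * A 2 1 * A 3 0
      - A 0 3 * A 1 0 * A 2 1 * A 3 2 + A 0 3 * A 1 0 * A 2 2 * A 3 1
      + A 0 3 * A 1 1 * A 2 0 * A 3 2 - A 0 3 * A 1 1 * A 2 2 * A 3 0
      - A 0 3 * A 1 2 * A 2 0 * A 3 1 + A 0 3 * A 1 2 * A 2 1 * A 3 0 := by
  have h1 : (Fin.succ 2 : Fin 4) = 3 := rfl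
  have h2 : Fin.succAbove (2 : Fin 4) (2 : Fin 3) = 3 := by decide
  have h3 : Fin.succAbove (3 : Fin 4) (2 : Fin 3) = 2 := by decide
  have h4 : Fin.succAbove (1 : Fin 4) (2 : Fin 3) = 3 := by decide
  simp [Matrix.det_succ_row_zero, Fin.sum_univ_succ, h1, h2, h3, h4]
  ring

/-- The Hessian determinant: determinant of the matrix of second partial derivatives. -/
noncomputable def hess {d : ℕ} (f : MvPolynomial (Fin d) ℂ) : MvPolynomial (Fin d) ℂ :=
  Matrix.det (Matrix.of fun i j : Fin d => MvPolynomial.pderiv i (MvPolynomial.pderiv j f))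

theorem key_hess_quad (a b c d e f h : ℂ) :
    hess (C a * (X 2 * X 3) + C b * X 2 ^ 2 + C c * X 3 ^ 2 + C d * (X 0 * X 3)
        + C e * (X 0 * X 2) + C f * (X 1 * X 3) + C h * (X 1 * X 2) : MvPolynomial (Fin 4) ℂ)
      = C ((e * f - d * h) ^ 2) := by
  rw [hess, det_fin_four']
  simp only [Matrix.of_apply, map_add, pderiv_C_mul, pderiv_mul, pderiv_pow, pderiv_X_self,
    pderiv_one, Derivation.map_natCast,
    pderiv_X_of_ne (by decide : (2:Fin 4) ≠ 0), pderiv_X_of_ne (by decide : (3:Fin 4) ≠ 0),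
    pderiv_X_of_ne (by decide : (0:Fin 4) ≠ 2), pderiv_X_of_ne (by decide : (1:Fin 4) ≠ 2),
    pderiv_X_of_ne (by decide : (3:Fin 4) ≠ 2), pderiv_X_of_ne (by decide : (0:Fin 4) ≠ 3),
    pderiv_X_of_ne (by decide : (1:Fin 4) ≠ 3), pderiv_X_of_ne (by decide : (2:Fin 4) ≠ 3),
    pderiv_X_of_ne (by decide : (3:Fin 4) ≠ 1), pderiv_X_of_ne (by decide : (2:Fin 4) ≠ 1),
    pderiv_X_of_ne (by decide : (0:Fin 4) ≠ 1), pderiv_X_of_ne (by decide : (1:Fin 4) ≠ 0)]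
  simp only [map_mul, map_sub, map_pow]
  norm_num
  ring

set_option maxHeartbeats 1600000 in
theorem stmt_13 (g : MvPolynomial (Fin 4) ℂ)
    (hg : g = X 2 ^ 4 + X 0 * X 2 ^ 2 * X 3 + X 1 * X 2 * X 3 ^ 2 + X 3 ^ 4) :
    hess g = C 9 * (X 2 * X 3) ^ 4
    ∧ (∀ u v : Fin 4 → ℂ,
        hess (∑ i : Fin 4, ∑ j : Fin 4, C (u i * v j) * pderiv i (pderiv j g))
          = C (16 * (u 3 ^ 2 * v 2 ^ 2 + u 2 * u 3 * v 2 * v 3 + u 2 ^ 2 * v 3 ^ 2) ^ 2))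
    ∧ ¬ ∃ B : Matrix (Fin 4) (Fin 4) ℂ, ∀ u v : Fin 4 → ℂ,
        16 * (u 3 ^ 2 * v 2 ^ 2 + u 2 * u 3 * v 2 * v 3 + u 2 ^ 2 * v 3 ^ 2) ^ 2
          = (∑ i : Fin 4, ∑ j : Fin 4, B i j * u i * v j) ^ 4 := by
  subst hg
  refine ⟨?_, ?_, ?_⟩
  · rw [hess, det_fin_four']
    simp only [Matrix.of_apply, map_add, pderiv_mul, pderiv_pow, pderiv_X_self, pderiv_one,
      Derivation.map_natCast,
      pderiv_X_of_ne (by decide : (2:Fin 4) ≠ 0), pderiv_X_of_ne (by decide : (3:Fin 4) ≠ 0),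
      pderiv_X_of_ne (by decide : (0:Fin 4) ≠ 2), pderiv_X_of_ne (by decide : (1:Fin 4) ≠ 2),
      pderiv_X_of_ne (by decide : (3:Fin 4) ≠ 2), pderiv_X_of_ne (by decide : (0:Fin 4) ≠ 3),
      pderiv_X_of_ne (by decide : (1:Fin 4) ≠ 3), pderiv_X_of_ne (by decide : (2:Fin 4) ≠ 3),
      pderiv_X_of_ne (by decide : (3:Fin 4) ≠ 1), pderiv_X_of_ne (by decide : (2:Fin 4) ≠ 1),
      pderiv_X_of_ne (by decide : (0:Fin 4) ≠ 1), pderiv_X_of_ne (by decide : (1:Fin 4) ≠ 0)]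
    norm_num [map_ofNat]
    ring
  · intro u v
    have hq : (∑ i : Fin 4, ∑ j : Fin 4, C (u i * v j) * pderiv i (pderiv j
          (X 2 ^ 4 + X 0 * X 2 ^ 2 * X 3 + X 1 * X 2 * X 3 ^ 2 + X 3 ^ 4
            : MvPolynomial (Fin 4) ℂ)))
        = C (2*(u 0*v 2+u 2*v 0) + 2*(u 1*v 3+u 3*v 1)) * (X 2 * X 3)
          + C ((u 0*v 3+u 3*v 0) + 12*(u 2*v 2)) * X 2 ^ 2
          + C ((u 1*v 2+u 2*v 1) + 12*(u 3*v 3)) * X 3 ^ 2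
          + C (2*(u 2*v 2)) * (X 0 * X 3)
          + C (2*(u 2*v 3+u 3*v 2)) * (X 0 * X 2)
          + C (2*(u 2*v 3+u 3*v 2)) * (X 1 * X 3)
          + C (2*(u 3*v 3)) * (X 1 * X 2) := by
      simp only [Fin.sum_univ_four, map_add, pderiv_mul, pderiv_pow, pderiv_X_self,
        pderiv_one, Derivation.map_natCast,
        pderiv_X_of_ne (by decide : (2:Fin 4) ≠ 0), pderiv_X_of_ne (by decide : (3:Fin 4) ≠ 0),
        pderiv_X_of_ne (by decide : (0:Fin 4) ≠ 2), pderiv_X_of_ne (by decide : (1:Fin 4) ≠ 2),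
        pderiv_X_of_ne (by decide : (3:Fin 4) ≠ 2), pderiv_X_of_ne (by decide : (0:Fin 4) ≠ 3),
        pderiv_X_of_ne (by decide : (1:Fin 4) ≠ 3), pderiv_X_of_ne (by decide : (2:Fin 4) ≠ 3),
        pderiv_X_of_ne (by decide : (3:Fin 4) ≠ 1), pderiv_X_of_ne (by decide : (2:Fin 4) ≠ 1),
        pderiv_X_of_ne (by decide : (0:Fin 4) ≠ 1), pderiv_X_of_ne (by decide : (1:Fin 4) ≠ 0)]
      simp only [map_mul, map_add, map_ofNat]
      norm_num
      ring
    rw [hq, key_hess_quad]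
    exact congrArg C (by ring)
  · rintro ⟨B, hB⟩
    have hA := hB ![0,0,1,0] ![0,0,1,0]
    have hBB := hB ![0,0,0,1] ![0,0,0,1]
    have hC := hB ![0,0,1,0] ![0,0,0,1]
    have hD := hB ![0,0,0,1] ![0,0,1,0]
    have hE := hB ![0,0,1,1] ![0,0,1,1]
    have hF := hB ![0,0,1,-1] ![0,0,1,1]
    simp only [Fin.sum_univ_four, Matrix.cons_val] at hA hBB hC hD hE hF
    norm_num [Fin.sum_univ_four] at hA hBB hC hD hE hF
    have h22 : B 2 2 = 0 := pow_eq_zero_iff (n := 4) (by norm_num) |>.mp hA.symm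
    have h33 : B 3 3 = 0 := pow_eq_zero_iff (n := 4) (by norm_num) |>.mp hBB.symm
    rw [h22, h33] at hE hF
    set x := B 2 3
    set y := B 3 2
    have hxy : x ^ 2 * y ^ 2 = 8 := by linear_combination (2*hC + 2*hD - hE - hF) / 12
    have h0 : (192 : ℂ) = 0 := by
      linear_combination (-(y^4)) * hC.symm - 16 * hD.symm + (x^2*y^2 + 8) * hxy
    norm_num at h0
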